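/- Symmetric transversal computation: fix L > 1 and x, y > 1. Let y₁, y₃ be unit space-like vectors in R⁴ and v₁, v₃ points of H³ with y₁∘y₃ = −L, v₁∘y₁ = 0 = v₃∘y₃, v₁∘v₃ = −L√((x+1)(y+1)/((x−1)(y−1))), v₁∘y₃ = −L√((x+1)/(x−1)), y₁∘v₃ = −L√((y+1)/(y−1)). Then the function D(s,t) = −(cosh s·v₁ − sinh s·y₁)∘(cosh t·v₃ − sinh t·y₃) has its unique critical point at (s₀,t₀) with cosh s₀ = √((x+1)/2), cosh t₀ = √((y+1)/2), and its minimum value is D(s₀,t₀) = 2L/√((x−1)(y−1)). -/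

import Mathlib

/-- The Lorentzian inner product on `ℝ⁴`. -/
def lprod (x y : Fin 4 → ℝ) : ℝ :=
  -(x 0 * y 0) + x 1 * y 1 + x 2 * y 2 + x 3 * y 3

lemma lprod_expand (u w p q : Fin 4 → ℝ) (c d e f : ℝ) :
    lprod (c • u - d • w) (e • p - f • q) =
      c*e*lprod u p - c*f*lprod u q - d*e*lprod w p + d*f*lprod w q := by
  simp only [lprod, Pi.smul_apply, Pi.sub_apply, smul_eq_mul]; ring

lemma one_var (a : ℝ) (ha : 1 < a) :
    ∃ s₀ : ℝ, Real.cosh s₀ = a / Real.sqrt (a^2-1) ∧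
      (a * Real.sinh s₀ - Real.cosh s₀ = 0) ∧
      (∀ s, a * Real.sinh s - Real.cosh s = 0 → s = s₀) ∧
      (∀ s, Real.sqrt (a^2-1) ≤ a * Real.cosh s - Real.sinh s) ∧
      (a * Real.cosh s₀ - Real.sinh s₀ = Real.sqrt (a^2-1)) := by
  set c := Real.sqrt (a^2-1) with hc_def
  have ha0 : 0 < a := by linarith
  have hpos : (0:ℝ) < a^2 - 1 := by nlinarith
  have hc2 : c^2 = a^2 - 1 := Real.sq_sqrt hpos.le
  have hcpos : 0 < c := Real.sqrt_pos.2 hpos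
  refine ⟨Real.arsinh (1/c), ?_, ?_, ?_, ?_, ?_⟩
  · rw [Real.cosh_arsinh]
    rw [show 1+(1/c)^2 = (a/c)^2 by field_simp; nlinarith]
    exact Real.sqrt_sq (by positivity)
  · rw [Real.sinh_arsinh, Real.cosh_arsinh,
      show 1+(1/c)^2 = (a/c)^2 by field_simp; nlinarith,
      Real.sqrt_sq (by positivity)]
    field_simp; ring
  · intro s hs
    have hcs : Real.cosh s > 0 := Real.cosh_pos s
    have hss : 0 < Real.sinh s := by nlinarith
    have hsq : Real.cosh s ^ 2 = Real.sinh s ^ 2 + 1 := Real.cosh_sq s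
    have h1 : Real.sinh s = 1/c := by
      have h2 : Real.sinh s ^ 2 * (a^2 - 1) = 1 := by nlinarith
      have : Real.sinh s ^ 2 = (1/c)^2 := by
        field_simp
        nlinarith
      nlinarith [one_div_pos.2 hcpos]
    have := Real.sinh_arsinh (1/c)
    exact Real.sinh_injective (by rw [h1, this])
  · intro s
    have hcs : Real.cosh s > 0 := Real.cosh_pos s
    have hsq : Real.cosh s ^ 2 = Real.sinh s ^ 2 + 1 := Real.cosh_sq s
    have hF : 0 < a * Real.cosh s - Real.sinh s := by
      have h1 : 0 < Real.cosh s - Real.sinh s := by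
        rw [Real.cosh_sub_sinh]; exact Real.exp_pos _
      nlinarith
    have : c ≤ Real.sqrt ((a * Real.cosh s - Real.sinh s)^2) := by
      apply Real.sqrt_le_sqrt; nlinarith [sq_nonneg (a * Real.sinh s - Real.cosh s)]
    rwa [Real.sqrt_sq hF.le] at this
  · rw [Real.sinh_arsinh, Real.cosh_arsinh,
      show 1+(1/c)^2 = (a/c)^2 by field_simp; nlinarith,
      Real.sqrt_sq (by positivity)]
    field_simp
    nlinarith

lemma sqrt_gt_one {u : ℝ} (h : 1 < u) : 1 < Real.sqrt u := by
  have := Real.sqrt_lt_sqrt (by norm_num : (0:ℝ) ≤ 1) h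
  simpa using this


set_option maxHeartbeats 1000000 in
/-- Symmetric transversal computation: when the four side pairings all equal
`L`, the distance function has its unique critical point at
`(s₀, t₀)` with `cosh s₀ = √((x+1)/2)`, `cosh t₀ = √((y+1)/2)`, and its
minimum value is `2L/√((x−1)(y−1))`. -/
theorem symmetric_transversal {y₁ y₃ v₁ v₃ : Fin 4 → ℝ} {L x y : ℝ}
    (hL : 1 < L) (hx : 1 < x) (hy : 1 < y)
    (hy₁ : lprod y₁ y₁ = 1) (hy₃ : lprod y₃ y₃ = 1)
    (hy₁y₃ : lprod y₁ y₃ = -L)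
    (hv₁H : lprod v₁ v₁ = -1) (hv₁pos : 0 < v₁ 0)
    (hv₃H : lprod v₃ v₃ = -1) (hv₃pos : 0 < v₃ 0)
    (hv₁y₁ : lprod v₁ y₁ = 0) (hv₃y₃ : lprod v₃ y₃ = 0)
    (hvv : lprod v₁ v₃ = -L * Real.sqrt ((x + 1) * (y + 1) / ((x - 1) * (y - 1))))
    (hvy : lprod v₁ y₃ = -L * Real.sqrt ((x + 1) / (x - 1)))
    (hyv : lprod y₁ v₃ = -L * Real.sqrt ((y + 1) / (y - 1)))
    (D : ℝ × ℝ → ℝ)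
    (hD : ∀ p : ℝ × ℝ, D p =
      -lprod (Real.cosh p.1 • v₁ - Real.sinh p.1 • y₁)
             (Real.cosh p.2 • v₃ - Real.sinh p.2 • y₃)) :
    ∃ s₀ t₀ : ℝ,
      Real.cosh s₀ = Real.sqrt ((x + 1) / 2) ∧
      Real.cosh t₀ = Real.sqrt ((y + 1) / 2) ∧
      fderiv ℝ D (s₀, t₀) = 0 ∧
      (∀ p : ℝ × ℝ, fderiv ℝ D p = 0 → p = (s₀, t₀)) ∧
      (∀ p : ℝ × ℝ, D (s₀, t₀) ≤ D p) ∧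
      D (s₀, t₀) = 2 * L / Real.sqrt ((x - 1) * (y - 1)) := by
  have hx1 : (0:ℝ) < x - 1 := by linarith
  have hy1 : (0:ℝ) < y - 1 := by linarith
  set a := Real.sqrt ((x+1)/(x-1)) with ha_def
  set b := Real.sqrt ((y+1)/(y-1)) with hb_def
  have ha1 : 1 < a := sqrt_gt_one (by rw [lt_div_iff₀ hx1]; linarith)
  have hb1 : 1 < b := sqrt_gt_one (by rw [lt_div_iff₀ hy1]; linarith)
  have ha2 : a^2 = (x+1)/(x-1) := Real.sq_sqrt (by positivity)
  have hb2 : b^2 = (y+1)/(y-1) := Real.sq_sqrt (by positivity)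
  have haa : a^2 - 1 = 2/(x-1) := by rw [ha2]; field_simp; norm_num
  have hbb : b^2 - 1 = 2/(y-1) := by rw [hb2]; field_simp; norm_num
  have hab : Real.sqrt ((x + 1) * (y + 1) / ((x - 1) * (y - 1))) = a * b := by
    rw [show (x+1)*(y+1)/((x-1)*(y-1)) = ((x+1)/(x-1))*((y+1)/(y-1)) by
      field_simp, Real.sqrt_mul (by positivity)]
  obtain ⟨s₀, hcs₀, hcrit_s, huniq_s, hlb_s, hmin_s⟩ := one_var a ha1
  obtain ⟨t₀, hct₀, hcrit_t, huniq_t, hlb_t, hmin_t⟩ := one_var b hb1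
  -- closed form for D
  have hDf : ∀ p : ℝ × ℝ, D p =
      L * ((a * Real.cosh p.1 - Real.sinh p.1) * (b * Real.cosh p.2 - Real.sinh p.2)) := by
    intro p
    rw [hD p, lprod_expand, hvv, hvy, hyv, hy₁y₃, hab]
    ring
  have hDfun : D = fun p : ℝ × ℝ =>
      L * ((a * Real.cosh p.1 - Real.sinh p.1) * (b * Real.cosh p.2 - Real.sinh p.2)) :=
    funext hDf
  -- derivative formula
  have deriv_eq : ∀ p : ℝ × ℝ, fderiv ℝ D p =
      L • ((a * Real.cosh p.1 - Real.sinh p.1) •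
          ((b * Real.sinh p.2 - Real.cosh p.2) • ContinuousLinearMap.snd ℝ ℝ ℝ) +
        (b * Real.cosh p.2 - Real.sinh p.2) •
          ((a * Real.sinh p.1 - Real.cosh p.1) • ContinuousLinearMap.fst ℝ ℝ ℝ)) := by
    intro p
    have hF1 : HasDerivAt (fun s => a * Real.cosh s - Real.sinh s)
        (a * Real.sinh p.1 - Real.cosh p.1) p.1 :=
      ((Real.hasDerivAt_cosh p.1).const_mul a).sub (Real.hasDerivAt_sinh p.1)
    have hG1 : HasDerivAt (fun t => b * Real.cosh t - Real.sinh t)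
        (b * Real.sinh p.2 - Real.cosh p.2) p.2 :=
      ((Real.hasDerivAt_cosh p.2).const_mul b).sub (Real.hasDerivAt_sinh p.2)
    have hFp : HasFDerivAt (fun q : ℝ × ℝ => a * Real.cosh q.1 - Real.sinh q.1)
        ((a * Real.sinh p.1 - Real.cosh p.1) • ContinuousLinearMap.fst ℝ ℝ ℝ) p :=
      hF1.comp_hasFDerivAt p (hasFDerivAt_fst)
    have hGp : HasFDerivAt (fun q : ℝ × ℝ => b * Real.cosh q.2 - Real.sinh q.2)
        ((b * Real.sinh p.2 - Real.cosh p.2) • ContinuousLinearMap.snd ℝ ℝ ℝ) p :=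
      hG1.comp_hasFDerivAt p (hasFDerivAt_snd)
    have hP := (hFp.mul hGp).const_mul L
    rw [hDfun]
    exact hP.fderiv
  -- positivity of the factors
  have hcapos : 0 < Real.sqrt (a^2-1) := Real.sqrt_pos.2 (by nlinarith)
  have hcbpos : 0 < Real.sqrt (b^2-1) := Real.sqrt_pos.2 (by nlinarith)
  have hGpos : ∀ t : ℝ, 0 < b * Real.cosh t - Real.sinh t :=
    fun t => lt_of_lt_of_le hcbpos (hlb_t t)
  have hFpos : ∀ s : ℝ, 0 < a * Real.cosh s - Real.sinh s :=
    fun s => lt_of_lt_of_le hcapos (hlb_s s)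
  refine ⟨s₀, t₀, ?_, ?_, ?_, ?_, ?_, ?_⟩
  · rw [hcs₀]
    rw [show (x+1)/2 = (a / Real.sqrt (a^2-1))^2 by
      rw [div_pow, Real.sq_sqrt (show (0:ℝ) ≤ a^2-1 by nlinarith), ha2]
      rw [show (x+1)/(x-1) - 1 = 2/(x-1) by field_simp; norm_num]
      rw [div_div_div_cancel_right₀]
      exact hx1.ne']
    exact (Real.sqrt_sq (by positivity)).symm
  · rw [hct₀]
    rw [show (y+1)/2 = (b / Real.sqrt (b^2-1))^2 by
      rw [div_pow, Real.sq_sqrt (show (0:ℝ) ≤ b^2-1 by nlinarith), hb2]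
      rw [show (y+1)/(y-1) - 1 = 2/(y-1) by field_simp; norm_num]
      rw [div_div_div_cancel_right₀]
      exact hy1.ne']
    exact (Real.sqrt_sq (by positivity)).symm
  · rw [deriv_eq (s₀, t₀)]
    simp only [hcrit_s, hcrit_t]
    simp
  · intro p h0
    rw [deriv_eq p] at h0
    have h1 := DFunLike.congr_fun h0 ((1:ℝ), (0:ℝ))
    have h2 := DFunLike.congr_fun h0 ((0:ℝ), (1:ℝ))
    simp [ContinuousLinearMap.smul_apply, ContinuousLinearMap.add_apply] at h1 h2
    have hLpos : (0:ℝ) < L := by linarith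
    have hF0 : a * Real.sinh p.1 - Real.cosh p.1 = 0 := by
      rcases h1 with h | h | h
      · linarith
      · exact absurd h (hGpos p.2).ne'
      · exact h
    have hG0 : b * Real.sinh p.2 - Real.cosh p.2 = 0 := by
      rcases h2 with h | h | h
      · linarith
      · exact absurd h (hFpos p.1).ne'
      · exact h
    have e1 : p.1 = s₀ := huniq_s p.1 hF0
    have e2 : p.2 = t₀ := huniq_t p.2 hG0
    exact Prod.ext e1 e2
  · intro p
    rw [hDf p, hDf (s₀, t₀)]
    have h1 := hlb_s p.1
    have h2 := hlb_t p.2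
    have key : Real.sqrt (a^2-1) * Real.sqrt (b^2-1) ≤
        (a * Real.cosh p.1 - Real.sinh p.1) * (b * Real.cosh p.2 - Real.sinh p.2) :=
      mul_le_mul h1 h2 hcbpos.le (by linarith [hFpos p.1])
    simp only []
    rw [hmin_s, hmin_t]
    exact mul_le_mul_of_nonneg_left key (by linarith)
  · rw [hDf (s₀, t₀)]
    simp only []
    rw [hmin_s, hmin_t, ← Real.sqrt_mul (by nlinarith), haa, hbb]
    rw [show 2/(x-1) * (2/(y-1)) = (2 / Real.sqrt ((x-1)*(y-1)))^2 by
      rw [div_pow, Real.sq_sqrt (by positivity)]; field_simp]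
    rw [Real.sqrt_sq (by positivity)]
    ring
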